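/- arXiv:1307.7014 — 8 statements merged into one kernel-verified Lean document; each statement's English description precedes it below -/
import Mathlib

section
/- Let f : R → S be a surjective unital ring homomorphism between associative unital rings, and let u ∈ M_n(S) be invertible. Then there exists an invertible matrix V ∈ M_{2n}(R) such that applying f entrywise to V yields diag(u, u⁻¹) ∈ M_{2n}(S). (Such a V can be obtained by lifting each factor of the factorization diag(u,u⁻¹) = [[1,u],[0,1]]·[[1,0],[-u⁻¹,1]]·[[1,u],[0,1]]·[[0,-1],[1,0]].) -/
open Matrix

lemma aux_e_mul {R : Type*} [Ring R] {n : Type*} [Fintype n] [DecidableEq n]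
    (a : Matrix n n R) :
    fromBlocks 1 a 0 1 * fromBlocks 1 (-a) 0 1 = (1 : Matrix (n ⊕ n) (n ⊕ n) R) := by
  rw [fromBlocks_multiply, ← fromBlocks_one]
  simp

lemma aux_f_mul {R : Type*} [Ring R] {n : Type*} [Fintype n] [DecidableEq n]
    (a : Matrix n n R) :
    fromBlocks 1 0 a 1 * fromBlocks 1 0 (-a) 1 = (1 : Matrix (n ⊕ n) (n ⊕ n) R) := by
  rw [fromBlocks_multiply, ← fromBlocks_one]
  simp

lemma aux_j_mul {R : Type*} [Ring R] {n : Type*} [Fintype n] [DecidableEq n] :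
    fromBlocks 0 (-1) 1 0 * fromBlocks 0 1 (-1) 0 = (1 : Matrix (n ⊕ n) (n ⊕ n) R) := by
  rw [fromBlocks_multiply, ← fromBlocks_one]
  simp

lemma aux_j_mul' {R : Type*} [Ring R] {n : Type*} [Fintype n] [DecidableEq n] :
    fromBlocks 0 1 (-1) 0 * fromBlocks 0 (-1) 1 0 = (1 : Matrix (n ⊕ n) (n ⊕ n) R) := by
  rw [fromBlocks_multiply, ← fromBlocks_one]
  simp

/-- If f : R → S is a surjective unital ring homomorphism and u ∈ M_n(S) is
invertible, then diag(u,u⁻¹) lifts to an invertible matrix V ∈ M_{2n}(R). -/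
theorem stmt_9 {R S : Type*} [Ring R] [Ring S] (f : R →+* S)
    (hf : Function.Surjective f) (n : ℕ)
    (u u' : Matrix (Fin n) (Fin n) S) (hu : u * u' = 1) (hu' : u' * u = 1) :
    ∃ V W : Matrix (Fin n ⊕ Fin n) (Fin n ⊕ Fin n) R,
      V * W = 1 ∧ W * V = 1 ∧ V.map f = Matrix.fromBlocks u 0 0 u' := by
  obtain ⟨a, ha⟩ : ∃ a : Matrix (Fin n) (Fin n) R, a.map f = u :=
    ⟨Matrix.of fun i j => (hf (u i j)).choose, by
      ext i j; exact (hf (u i j)).choose_spec⟩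
  obtain ⟨b, hb⟩ : ∃ b : Matrix (Fin n) (Fin n) R, b.map f = u' :=
    ⟨Matrix.of fun i j => (hf (u' i j)).choose, by
      ext i j; exact (hf (u' i j)).choose_spec⟩
  set E : Matrix (Fin n ⊕ Fin n) (Fin n ⊕ Fin n) R := fromBlocks 1 a 0 1 with hE
  set E' : Matrix (Fin n ⊕ Fin n) (Fin n ⊕ Fin n) R := fromBlocks 1 (-a) 0 1 with hE'
  set F : Matrix (Fin n ⊕ Fin n) (Fin n ⊕ Fin n) R := fromBlocks 1 0 (-b) 1 with hF
  set F' : Matrix (Fin n ⊕ Fin n) (Fin n ⊕ Fin n) R := fromBlocks 1 0 b 1 with hF'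
  set J : Matrix (Fin n ⊕ Fin n) (Fin n ⊕ Fin n) R := fromBlocks 0 (-1) 1 0 with hJ
  set J' : Matrix (Fin n ⊕ Fin n) (Fin n ⊕ Fin n) R := fromBlocks 0 1 (-1) 0 with hJ'
  have hEE : E * E' = 1 := aux_e_mul a
  have hEE' : E' * E = 1 := by simpa using aux_e_mul (-a)
  have hFF : F * F' = 1 := by simpa using aux_f_mul (-b)
  have hFF' : F' * F = 1 := aux_f_mul b
  refine ⟨E * F * E * J, J' * E' * F' * E', ?_, ?_, ?_⟩
  · calc E * F * E * J * (J' * E' * F' * E')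
        = E * (F * (E * ((J * J') * E') * F')) * E' := by
          simp only [mul_assoc]
      _ = 1 := by rw [hJ, hJ', aux_j_mul]; simp [hEE, hFF]
  · calc J' * E' * F' * E' * (E * F * E * J)
        = J' * (E' * (F' * ((E' * E) * F) * E)) * J := by
          simp only [mul_assoc]
      _ = 1 := by
          rw [hEE']; simp only [one_mul, mul_one, hFF', hEE']
          rw [hJ, hJ']; exact aux_j_mul'
  · have hmap : ∀ A B : Matrix (Fin n ⊕ Fin n) (Fin n ⊕ Fin n) R,
        (A * B).map f = A.map f * B.map f := fun A B =>
      map_mul (f.mapMatrix) A B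
    rw [hmap, hmap, hmap]
    have hEm : E.map f = fromBlocks 1 u 0 1 := by
      rw [hE, fromBlocks_map]; simp [ha, Matrix.map_one f f.map_zero f.map_one,
        Matrix.map_zero f f.map_zero]
    have hFm : F.map f = fromBlocks 1 0 (-u') 1 := by
      rw [hF, fromBlocks_map]
      simp [Matrix.map_one f f.map_zero f.map_one, Matrix.map_zero f f.map_zero]
      rw [show (-b).map f = -(b.map f) from by ext i j; simp, hb]
    have hJm : J.map f = fromBlocks 0 (-1) 1 0 := by
      rw [hJ, fromBlocks_map]
      simp [Matrix.map_one f f.map_zero f.map_one, Matrix.map_zero f f.map_zero]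
      rw [show (-1 : Matrix (Fin n) (Fin n) R).map f = -((1 : Matrix (Fin n) (Fin n) R).map f)
        from by ext i j; simp [Matrix.one_apply, apply_ite f], Matrix.map_one f f.map_zero f.map_one]
    rw [hEm, hFm, hJm]
    rw [fromBlocks_multiply, fromBlocks_multiply, fromBlocks_multiply]
    simp [hu, hu']
end

section
/- Let f : R → S be a surjective unital ring homomorphism between associative unital rings, let α ∈ M_n(S) be invertible, and set ξ = diag(α, α⁻¹) ∈ M_{2n}(S). Then there exists an invertible matrix Ṽ ∈ M_{2n}(R) with f_*(Ṽ) = ξ, and the 4n×4n matrix W = diag(Ṽ, Ṽ⁻¹) is invertible in M_{4n}(R), satisfies f_*(W) = diag(ξ, ξ⁻¹), and f_*(W) is conjugate in M_{4n}(S), by an invertible matrix, to diag(ξ, ξ) = ξ ⊕ ξ. -/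
open Matrix

section aux
variable {T : Type*} [Ring T] {n : ℕ}

lemma aux_pair1 (a : Matrix (Fin n) (Fin n) T) :
    (fromBlocks 1 a 0 1) * (fromBlocks 1 (-a) 0 1) = (1 : Matrix (Fin n ⊕ Fin n) (Fin n ⊕ Fin n) T) := by
  simp [Matrix.fromBlocks_multiply, ← Matrix.fromBlocks_one]

lemma aux_pair1' (a : Matrix (Fin n) (Fin n) T) :
    (fromBlocks 1 (-a) 0 1) * (fromBlocks 1 a 0 1) = (1 : Matrix (Fin n ⊕ Fin n) (Fin n ⊕ Fin n) T) := by
  simp [Matrix.fromBlocks_multiply, ← Matrix.fromBlocks_one]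

lemma aux_pair2 (a : Matrix (Fin n) (Fin n) T) :
    (fromBlocks 1 0 (-a) 1) * (fromBlocks 1 0 a 1) = (1 : Matrix (Fin n ⊕ Fin n) (Fin n ⊕ Fin n) T) := by
  simp [Matrix.fromBlocks_multiply, ← Matrix.fromBlocks_one]

lemma aux_pair2' (a : Matrix (Fin n) (Fin n) T) :
    (fromBlocks 1 0 a 1) * (fromBlocks 1 0 (-a) 1) = (1 : Matrix (Fin n ⊕ Fin n) (Fin n ⊕ Fin n) T) := by
  simp [Matrix.fromBlocks_multiply, ← Matrix.fromBlocks_one]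

lemma aux_pair3 :
    (fromBlocks 0 (-1) 1 0 : Matrix (Fin n ⊕ Fin n) (Fin n ⊕ Fin n) T) * (fromBlocks 0 1 (-1) 0) = 1 := by
  simp [Matrix.fromBlocks_multiply, ← Matrix.fromBlocks_one]

lemma aux_pair3' :
    (fromBlocks 0 1 (-1) 0 : Matrix (Fin n ⊕ Fin n) (Fin n ⊕ Fin n) T) * (fromBlocks 0 (-1) 1 0) = 1 := by
  simp [Matrix.fromBlocks_multiply, ← Matrix.fromBlocks_one]

lemma aux_decomp (a b : Matrix (Fin n) (Fin n) T) (hab : a * b = 1) (hba : b * a = 1) :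
    (fromBlocks 1 a 0 1) * (fromBlocks 1 0 (-b) 1) * (fromBlocks 1 a 0 1) * (fromBlocks 0 (-1) 1 0)
      = fromBlocks a 0 0 b := by
  simp [Matrix.fromBlocks_multiply, hab, hba, Matrix.mul_sub, Matrix.sub_mul]

end aux

/-- For f : R → S surjective and α ∈ M_n(S) invertible, with ξ = diag(α,α⁻¹):
there is an invertible lift Ṽ ∈ M_{2n}(R) of ξ, the matrix W = diag(Ṽ,Ṽ⁻¹) is
invertible in M_{4n}(R), f_*(W) = diag(ξ,ξ⁻¹), and f_*(W) is conjugate in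
M_{4n}(S), by an invertible matrix, to diag(ξ,ξ) = ξ ⊕ ξ. -/
theorem stmt_10 {R S : Type*} [Ring R] [Ring S] (f : R →+* S)
    (hf : Function.Surjective f) (n : ℕ)
    (α α' : Matrix (Fin n) (Fin n) S) (hα : α * α' = 1) (hα' : α' * α = 1) :
    ∃ V V' : Matrix (Fin n ⊕ Fin n) (Fin n ⊕ Fin n) R,
      V * V' = 1 ∧ V' * V = 1 ∧
      V.map f = Matrix.fromBlocks α 0 0 α' ∧
      Matrix.fromBlocks V 0 0 V' * Matrix.fromBlocks V' 0 0 V = 1 ∧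
      Matrix.fromBlocks V' 0 0 V * Matrix.fromBlocks V 0 0 V' = 1 ∧
      (Matrix.fromBlocks V 0 0 V').map f =
        Matrix.fromBlocks (Matrix.fromBlocks α 0 0 α') 0 0
          (Matrix.fromBlocks α' 0 0 α) ∧
      ∃ C C' : Matrix ((Fin n ⊕ Fin n) ⊕ (Fin n ⊕ Fin n))
          ((Fin n ⊕ Fin n) ⊕ (Fin n ⊕ Fin n)) S,
        C * C' = 1 ∧ C' * C = 1 ∧
        (Matrix.fromBlocks V 0 0 V').map f =
          C * Matrix.fromBlocks (Matrix.fromBlocks α 0 0 α') 0 0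
            (Matrix.fromBlocks α 0 0 α') * C' := by
  obtain ⟨β, hβ⟩ : ∃ β : Matrix (Fin n) (Fin n) R, β.map f = α :=
    ⟨Matrix.of fun i j => (hf (α i j)).choose, by ext i j; exact (hf (α i j)).choose_spec⟩
  obtain ⟨β', hβ'⟩ : ∃ β' : Matrix (Fin n) (Fin n) R, β'.map f = α' :=
    ⟨Matrix.of fun i j => (hf (α' i j)).choose, by ext i j; exact (hf (α' i j)).choose_spec⟩
  set E1 : Matrix (Fin n ⊕ Fin n) (Fin n ⊕ Fin n) R := fromBlocks 1 β 0 1 with hE1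
  set E2 : Matrix (Fin n ⊕ Fin n) (Fin n ⊕ Fin n) R := fromBlocks 1 0 (-β') 1 with hE2
  set E4 : Matrix (Fin n ⊕ Fin n) (Fin n ⊕ Fin n) R := fromBlocks 0 (-1) 1 0 with hE4
  set F1 : Matrix (Fin n ⊕ Fin n) (Fin n ⊕ Fin n) R := fromBlocks 1 (-β) 0 1 with hF1
  set F2 : Matrix (Fin n ⊕ Fin n) (Fin n ⊕ Fin n) R := fromBlocks 1 0 β' 1 with hF2
  set F4 : Matrix (Fin n ⊕ Fin n) (Fin n ⊕ Fin n) R := fromBlocks 0 1 (-1) 0 with hF4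
  have h4 : E4 * F4 = 1 := aux_pair3
  have h1 : E1 * F1 = 1 := aux_pair1 β
  have h2 : E2 * F2 = 1 := aux_pair2 β'
  have h4' : F4 * E4 = 1 := aux_pair3'
  have h1' : F1 * E1 = 1 := aux_pair1' β
  have h2' : F2 * E2 = 1 := aux_pair2' β'
  have hVV : E1 * E2 * E1 * E4 * (F4 * F1 * F2 * F1) = 1 := by
    calc E1 * E2 * E1 * E4 * (F4 * F1 * F2 * F1)
        = E1 * (E2 * ((E1 * ((E4 * F4) * F1)) * F2)) * F1 := by noncomm_ring
      _ = 1 := by rw [h4, one_mul, h1, one_mul, h2, mul_one, h1]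
  have hVV' : F4 * F1 * F2 * F1 * (E1 * E2 * E1 * E4) = 1 := by
    calc F4 * F1 * F2 * F1 * (E1 * E2 * E1 * E4)
        = F4 * (F1 * ((F2 * ((F1 * E1) * E2)) * E1)) * E4 := by noncomm_ring
      _ = 1 := by rw [h1', one_mul, h2', one_mul, h1', mul_one, h4']
  have hnβ : (-β).map ⇑f = -α := by ext i j; simp [← hβ]
  have hnβ' : (-β').map ⇑f = -α' := by ext i j; simp [← hβ']
  have hn1 : ((-1 : Matrix (Fin n) (Fin n) R)).map ⇑f = -1 := by
    ext i j; simp [Matrix.neg_apply, Matrix.one_apply, apply_ite f]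
  have hV : (E1 * E2 * E1 * E4).map ⇑f = fromBlocks α 0 0 α' := by
    have : (E1 * E2 * E1 * E4).map ⇑f
        = (fromBlocks 1 α 0 1) * (fromBlocks 1 0 (-α') 1) * (fromBlocks 1 α 0 1)
          * (fromBlocks 0 (-1) 1 0) := by
      simp [hE1, hE2, hE4, Matrix.map_mul, Matrix.fromBlocks_map, hβ, hβ', hnβ', hn1]
    rw [this, aux_decomp α α' hα hα']
  have key : (fromBlocks α 0 0 α') * (fromBlocks α' 0 0 α)
      = (1 : Matrix (Fin n ⊕ Fin n) (Fin n ⊕ Fin n) S) := by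
    simp [Matrix.fromBlocks_multiply, hα, hα', ← Matrix.fromBlocks_one]
  have hV' : (F4 * F1 * F2 * F1).map ⇑f = fromBlocks α' 0 0 α := by
    have hmap : (F4 * F1 * F2 * F1).map ⇑f * (fromBlocks α 0 0 α') = 1 := by
      rw [← hV, ← Matrix.map_mul, hVV', Matrix.map_one f f.map_zero f.map_one]
    exact left_inv_eq_right_inv hmap key
  refine ⟨E1 * E2 * E1 * E4, F4 * F1 * F2 * F1, hVV, hVV', hV, ?_, ?_, ?_, ?_⟩
  · simp [Matrix.fromBlocks_multiply, hVV, hVV', ← Matrix.fromBlocks_one]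
  · simp [Matrix.fromBlocks_multiply, hVV, hVV', ← Matrix.fromBlocks_one]
  · simp [Matrix.fromBlocks_map, hV, hV', f.map_zero]
  · set P : Matrix (Fin n ⊕ Fin n) (Fin n ⊕ Fin n) S := fromBlocks 0 1 1 0 with hP
    refine ⟨fromBlocks 1 0 0 P, fromBlocks 1 0 0 P, ?_, ?_, ?_⟩
    · simp [hP, Matrix.fromBlocks_multiply, ← Matrix.fromBlocks_one]
    · simp [hP, Matrix.fromBlocks_multiply, ← Matrix.fromBlocks_one]
    · simp [Matrix.fromBlocks_map, hV, hV', hP, Matrix.fromBlocks_multiply, f.map_zero]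
end

section
/- Let j₁ : Λ₁ → Λ' and j₂ : Λ₂ → Λ' be unital ring homomorphisms and let Λ be the pullback ring, i.e. the subring of Λ₁ × Λ₂ of pairs (λ₁, λ₂) with j₁(λ₁) = j₂(λ₂). Let p₁ ∈ M_n(Λ₁) and p₂ ∈ M_n(Λ₂) be idempotent matrices and u ∈ M_n(Λ') an invertible matrix with j₁_*(p₁) = u · j₂_*(p₂) · u⁻¹. Assume u lifts to an invertible matrix ũ ∈ M_n(Λ₂) with j₂_*(ũ) = u. Then, setting p₂' = ũ p₂ ũ⁻¹, every pair of corresponding entries ((p₁)_{ij}, (p₂')_{ij}) lies in Λ, and the resulting matrix p = ((p₁)_{ij}, (p₂')_{ij}) ∈ M_n(Λ) is idempotent. -/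
/-- The pullback ring of two ring homomorphisms j₁ : Λ₁ → Λ' and j₂ : Λ₂ → Λ',
as a subring of Λ₁ × Λ₂. -/
def ringPullback {Λ₁ Λ₂ Λ' : Type*} [Ring Λ₁] [Ring Λ₂] [Ring Λ']
    (j₁ : Λ₁ →+* Λ') (j₂ : Λ₂ →+* Λ') : Subring (Λ₁ × Λ₂) where
  carrier := {x | j₁ x.1 = j₂ x.2}
  zero_mem' := by simp
  one_mem' := by simp
  add_mem' := by
    intro a b ha hb
    simp only [Set.mem_setOf_eq, Prod.fst_add, Prod.snd_add, map_add] at *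
    rw [ha, hb]
  neg_mem' := by
    intro a ha
    simp only [Set.mem_setOf_eq, Prod.fst_neg, Prod.snd_neg, map_neg] at *
    rw [ha]
  mul_mem' := by
    intro a b ha hb
    simp only [Set.mem_setOf_eq, Prod.fst_mul, Prod.snd_mul, map_mul] at *
    rw [ha, hb]

/-- Lemma 28: if p₁, p₂ are idempotents with j₁_*(p₁) = u·j₂_*(p₂)·u⁻¹ and the
invertible u lifts to an invertible v (= ũ) over Λ₂, then with p₂' = v·p₂·v⁻¹ all
entry pairs of (p₁, p₂') lie in the pullback ring Λ and the resulting matrix over Λ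
(equivalently, over Λ₁ × Λ₂) is idempotent. -/
theorem stmt_11 {Λ₁ Λ₂ Λ' : Type*} [Ring Λ₁] [Ring Λ₂] [Ring Λ']
    (j₁ : Λ₁ →+* Λ') (j₂ : Λ₂ →+* Λ') (n : ℕ)
    (p₁ : Matrix (Fin n) (Fin n) Λ₁) (p₂ : Matrix (Fin n) (Fin n) Λ₂)
    (hp₁ : p₁ * p₁ = p₁) (hp₂ : p₂ * p₂ = p₂)
    (u u' : Matrix (Fin n) (Fin n) Λ') (hu : u * u' = 1) (hu' : u' * u = 1)
    (hconj : p₁.map j₁ = u * p₂.map j₂ * u')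
    (v v' : Matrix (Fin n) (Fin n) Λ₂) (hv : v * v' = 1) (hv' : v' * v = 1)
    (hlift : v.map j₂ = u) :
    (∀ i j : Fin n,
      (p₁ i j, (v * p₂ * v') i j) ∈ ringPullback j₁ j₂) ∧
    (Matrix.of fun i j : Fin n => (p₁ i j, (v * p₂ * v') i j)) *
        (Matrix.of fun i j : Fin n => (p₁ i j, (v * p₂ * v') i j)) =
      (Matrix.of fun i j : Fin n => (p₁ i j, (v * p₂ * v') i j)) := by
  have hv'lift : v'.map j₂ = u' := by
    have h1 : u * v'.map j₂ = 1 := by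
      rw [← hlift, ← Matrix.map_mul, hv, Matrix.map_one _ (map_zero j₂) (map_one j₂)]
    calc v'.map j₂ = (u' * u) * v'.map j₂ := by rw [hu', one_mul]
      _ = u' * (u * v'.map j₂) := by rw [mul_assoc]
      _ = u' := by rw [h1, mul_one]
  have key : (v * p₂ * v').map j₂ = p₁.map j₁ := by
    rw [Matrix.map_mul, Matrix.map_mul, hlift, hv'lift, hconj]
  have hmem : ∀ i j : Fin n, (p₁ i j, (v * p₂ * v') i j) ∈ ringPullback j₁ j₂ := by
    intro i j
    have := congrFun (congrFun key i) j
    simpa [ringPullback, Matrix.map_apply] using this.symm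
  refine ⟨hmem, ?_⟩
  have hq : (v * p₂ * v') * (v * p₂ * v') = v * p₂ * v' := by
    calc (v * p₂ * v') * (v * p₂ * v') = v * p₂ * (v' * v) * p₂ * v' := by
          simp [mul_assoc]
      _ = v * (p₂ * p₂) * v' := by rw [hv']; simp [mul_assoc]
      _ = v * p₂ * v' := by rw [hp₂]
  ext i j
  · simpa [Matrix.mul_apply, Prod.fst_sum] using congrFun (congrFun hp₁ i) j
  · simpa [Matrix.mul_apply, Prod.snd_sum] using congrFun (congrFun hq i) j
end

section
/- Let j₁ : Λ₁ → Λ' and j₂ : Λ₂ → Λ' be unital ring homomorphisms with j₂ surjective, and let Λ be the pullback ring. Let p₁ ∈ M_n(Λ₁) and p₂ ∈ M_n(Λ₂) be idempotent matrices and u ∈ M_n(Λ') an invertible matrix such that j₁_*(p₁) = u · j₂_*(p₂) · u⁻¹. Then: (a) j₁_*(p₁ ⊕ 0_n) = U · j₂_*(p₂ ⊕ 0_n) · U⁻¹ where U = diag(u, u⁻¹) ∈ M_{2n}(Λ'); (b) there exists an invertible Ũ ∈ M_{2n}(Λ₂) with j₂_*(Ũ) = U; and (c) setting p̃₂ = Ũ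 (p₂ ⊕ 0_n) Ũ⁻¹, the pair (p₁ ⊕ 0_n, p̃₂) defines an idempotent matrix p ∈ M_{2n}(Λ) with i₁_*(p) = p₁ ⊕ 0_n and i₂_*(p) = p̃₂. -/
/-- Theorem 27 / Lemma 29 (idempotent case): with j₂ surjective and
j₁_*(p₁) = u·j₂_*(p₂)·u⁻¹, one has
(a) j₁_*(p₁⊕0) = U·j₂_*(p₂⊕0)·U⁻¹ with U = diag(u,u⁻¹);
(b) U lifts to an invertible W ∈ M_{2n}(Λ₂);
(c) with p̃₂ = W·(p₂⊕0)·W⁻¹, the pair (p₁⊕0, p̃₂) has all entry pairs in the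
pullback ring Λ and defines an idempotent matrix p over Λ whose coordinate
projections are p₁⊕0 and p̃₂. -/
theorem stmt_12 {Λ₁ Λ₂ Λ' : Type*} [Ring Λ₁] [Ring Λ₂] [Ring Λ']
    (j₁ : Λ₁ →+* Λ') (j₂ : Λ₂ →+* Λ') (hj₂ : Function.Surjective j₂) (n : ℕ)
    (p₁ : Matrix (Fin n) (Fin n) Λ₁) (p₂ : Matrix (Fin n) (Fin n) Λ₂)
    (hp₁ : p₁ * p₁ = p₁) (hp₂ : p₂ * p₂ = p₂)
    (u u' : Matrix (Fin n) (Fin n) Λ') (hu : u * u' = 1) (hu' : u' * u = 1)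
    (hconj : p₁.map j₁ = u * p₂.map j₂ * u') :
    (Matrix.fromBlocks p₁ 0 0 0).map j₁ =
      Matrix.fromBlocks u 0 0 u' * ((Matrix.fromBlocks p₂ 0 0 0 : Matrix (Fin n ⊕ Fin n) (Fin n ⊕ Fin n) Λ₂)).map j₂ *
        Matrix.fromBlocks u' 0 0 u ∧
    ∃ W W' : Matrix (Fin n ⊕ Fin n) (Fin n ⊕ Fin n) Λ₂,
      W * W' = 1 ∧ W' * W = 1 ∧
      W.map j₂ = Matrix.fromBlocks u 0 0 u' ∧
      (∀ i j : Fin n ⊕ Fin n,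
        (((Matrix.fromBlocks p₁ 0 0 0 : Matrix (Fin n ⊕ Fin n) (Fin n ⊕ Fin n) Λ₁)) i j,
          (W * (Matrix.fromBlocks p₂ 0 0 0 : Matrix (Fin n ⊕ Fin n) (Fin n ⊕ Fin n) Λ₂) * W') i j) ∈ ringPullback j₁ j₂) ∧
      (Matrix.of fun i j : Fin n ⊕ Fin n =>
            (((Matrix.fromBlocks p₁ 0 0 0 : Matrix (Fin n ⊕ Fin n) (Fin n ⊕ Fin n) Λ₁)) i j,
              (W * (Matrix.fromBlocks p₂ 0 0 0 : Matrix (Fin n ⊕ Fin n) (Fin n ⊕ Fin n) Λ₂) * W') i j)) *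
          (Matrix.of fun i j : Fin n ⊕ Fin n =>
            (((Matrix.fromBlocks p₁ 0 0 0 : Matrix (Fin n ⊕ Fin n) (Fin n ⊕ Fin n) Λ₁)) i j,
              (W * (Matrix.fromBlocks p₂ 0 0 0 : Matrix (Fin n ⊕ Fin n) (Fin n ⊕ Fin n) Λ₂) * W') i j)) =
        (Matrix.of fun i j : Fin n ⊕ Fin n =>
          (((Matrix.fromBlocks p₁ 0 0 0 : Matrix (Fin n ⊕ Fin n) (Fin n ⊕ Fin n) Λ₁)) i j,
            (W * (Matrix.fromBlocks p₂ 0 0 0 : Matrix (Fin n ⊕ Fin n) (Fin n ⊕ Fin n) Λ₂) * W') i j)) ∧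
      (Matrix.of fun i j : Fin n ⊕ Fin n =>
          (((Matrix.fromBlocks p₁ 0 0 0 : Matrix (Fin n ⊕ Fin n) (Fin n ⊕ Fin n) Λ₁)) i j,
            (W * (Matrix.fromBlocks p₂ 0 0 0 : Matrix (Fin n ⊕ Fin n) (Fin n ⊕ Fin n) Λ₂) * W') i j)).map
          (RingHom.fst Λ₁ Λ₂) = Matrix.fromBlocks p₁ 0 0 0 ∧
      (Matrix.of fun i j : Fin n ⊕ Fin n =>
          (((Matrix.fromBlocks p₁ 0 0 0 : Matrix (Fin n ⊕ Fin n) (Fin n ⊕ Fin n) Λ₁)) i j,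
            (W * (Matrix.fromBlocks p₂ 0 0 0 : Matrix (Fin n ⊕ Fin n) (Fin n ⊕ Fin n) Λ₂) * W') i j)).map
          (RingHom.snd Λ₁ Λ₂) = W * (Matrix.fromBlocks p₂ 0 0 0 : Matrix (Fin n ⊕ Fin n) (Fin n ⊕ Fin n) Λ₂) * W' := by
  classical
  -- lifts of u and u' along j₂, entrywise
  set v : Matrix (Fin n) (Fin n) Λ₂ := Matrix.of fun i j => Classical.choose (hj₂ (u i j)) with hv
  set v' : Matrix (Fin n) (Fin n) Λ₂ := Matrix.of fun i j => Classical.choose (hj₂ (u' i j)) with hv'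
  have hvmap : v.map j₂ = u := by
    ext i j; exact Classical.choose_spec (hj₂ (u i j))
  have hv'map : v'.map j₂ = u' := by
    ext i j; exact Classical.choose_spec (hj₂ (u' i j))
  have h0 : (0 : Matrix (Fin n) (Fin n) Λ₂).map j₂ = 0 := Matrix.map_zero _ (map_zero j₂)
  have h1 : (1 : Matrix (Fin n) (Fin n) Λ₂).map j₂ = 1 := Matrix.map_one _ (map_zero j₂) (map_one j₂)
  have hn1 : (-1 : Matrix (Fin n) (Fin n) Λ₂).map j₂ = -1 := by
    ext i j
    simp [Matrix.map_apply, Matrix.neg_apply, Matrix.one_apply, apply_ite j₂]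
  have hnv'map : (-v').map j₂ = -u' := by
    rw [← hv'map]; ext i j; simp [Matrix.map_apply]
  -- elementary matrices over Λ₂
  set A : Matrix (Fin n ⊕ Fin n) (Fin n ⊕ Fin n) Λ₂ := Matrix.fromBlocks 1 v 0 1 with hA
  set Ai : Matrix (Fin n ⊕ Fin n) (Fin n ⊕ Fin n) Λ₂ := Matrix.fromBlocks 1 (-v) 0 1 with hAi
  set B : Matrix (Fin n ⊕ Fin n) (Fin n ⊕ Fin n) Λ₂ := Matrix.fromBlocks 1 0 (-v') 1 with hB
  set Bi : Matrix (Fin n ⊕ Fin n) (Fin n ⊕ Fin n) Λ₂ := Matrix.fromBlocks 1 0 v' 1 with hBi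
  set D : Matrix (Fin n ⊕ Fin n) (Fin n ⊕ Fin n) Λ₂ := Matrix.fromBlocks 0 (-1) 1 0 with hD
  set Di : Matrix (Fin n ⊕ Fin n) (Fin n ⊕ Fin n) Λ₂ := Matrix.fromBlocks 0 1 (-1) 0 with hDi
  have hAAi : A * Ai = 1 := by
    simp [hA, hAi, Matrix.fromBlocks_multiply, ← Matrix.fromBlocks_one]
  have hAiA : Ai * A = 1 := by
    simp [hA, hAi, Matrix.fromBlocks_multiply, ← Matrix.fromBlocks_one]
  have hBBi : B * Bi = 1 := by
    simp [hB, hBi, Matrix.fromBlocks_multiply, ← Matrix.fromBlocks_one]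
  have hBiB : Bi * B = 1 := by
    simp [hB, hBi, Matrix.fromBlocks_multiply, ← Matrix.fromBlocks_one]
  have hDDi : D * Di = 1 := by
    simp [hD, hDi, Matrix.fromBlocks_multiply, ← Matrix.fromBlocks_one]
  have hDiD : Di * D = 1 := by
    simp [hD, hDi, Matrix.fromBlocks_multiply, ← Matrix.fromBlocks_one]
  set W : Matrix (Fin n ⊕ Fin n) (Fin n ⊕ Fin n) Λ₂ := A * B * A * D with hW
  set W' : Matrix (Fin n ⊕ Fin n) (Fin n ⊕ Fin n) Λ₂ := Di * Ai * Bi * Ai with hW'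
  have hWW' : W * W' = 1 := by
    rw [hW, hW']
    simp only [mul_assoc]
    rw [← mul_assoc D Di, hDDi, one_mul, ← mul_assoc A Ai, hAAi, one_mul,
      ← mul_assoc B Bi, hBBi, one_mul, hAAi]
  have hW'W : W' * W = 1 := by
    rw [hW, hW']
    simp only [mul_assoc]
    rw [← mul_assoc Ai A, hAiA, one_mul, ← mul_assoc Bi B, hBiB, one_mul,
      ← mul_assoc Ai A, hAiA, one_mul, hDiD]
  -- the map of W is the matrix U = diag(u, u')
  have hmapA : A.map j₂ = Matrix.fromBlocks 1 u 0 1 := by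
    rw [hA, Matrix.fromBlocks_map, hvmap, h0, h1]
  have hmapB : B.map j₂ = Matrix.fromBlocks 1 0 (-u') 1 := by
    rw [hB, Matrix.fromBlocks_map, hnv'map, h0, h1]
  have hmapD : D.map j₂ = Matrix.fromBlocks 0 (-1) 1 0 := by
    rw [hD, Matrix.fromBlocks_map, h0, h1, hn1]
  have hWmap : W.map j₂ = Matrix.fromBlocks u 0 0 u' := by
    rw [hW, Matrix.map_mul, Matrix.map_mul, Matrix.map_mul, hmapA, hmapB, hmapD]
    simp [Matrix.fromBlocks_multiply, hu, hu']
  have hW'map : W'.map j₂ = Matrix.fromBlocks u' 0 0 u := by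
    have hone : W.map j₂ * W'.map j₂ = 1 := by
      rw [← Matrix.map_mul, hWW']
      exact Matrix.map_one _ (map_zero j₂) (map_one j₂)
    have h2 : Matrix.fromBlocks u' 0 0 u * W.map j₂ = 1 := by
      rw [hWmap]; simp [Matrix.fromBlocks_multiply, hu, hu', ← Matrix.fromBlocks_one]
    calc W'.map j₂ = 1 * W'.map j₂ := (one_mul _).symm
      _ = Matrix.fromBlocks u' 0 0 u * (W.map j₂ * W'.map j₂) := by rw [← h2, mul_assoc]
      _ = Matrix.fromBlocks u' 0 0 u := by rw [hone, mul_one]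
  -- part (a)
  have parta : (Matrix.fromBlocks p₁ 0 0 0).map j₁ =
      Matrix.fromBlocks u 0 0 u' * ((Matrix.fromBlocks p₂ 0 0 0 : Matrix (Fin n ⊕ Fin n) (Fin n ⊕ Fin n) Λ₂)).map j₂ *
        Matrix.fromBlocks u' 0 0 u := by
    rw [Matrix.fromBlocks_map, Matrix.fromBlocks_map]
    simp [Matrix.fromBlocks_multiply, hconj, Matrix.map_zero _ (map_zero j₁), Matrix.map_zero _ (map_zero j₂)]
  -- key: map of conjugated matrix
  have hkey : (W * (Matrix.fromBlocks p₂ 0 0 0 : Matrix (Fin n ⊕ Fin n) (Fin n ⊕ Fin n) Λ₂) * W').map j₂ =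
      (Matrix.fromBlocks p₁ 0 0 0).map j₁ := by
    rw [Matrix.map_mul, Matrix.map_mul, hWmap, hW'map, parta]
  set P₂ : Matrix (Fin n ⊕ Fin n) (Fin n ⊕ Fin n) Λ₂ := Matrix.fromBlocks p₂ 0 0 0 with hP₂
  set P₁ : Matrix (Fin n ⊕ Fin n) (Fin n ⊕ Fin n) Λ₁ := Matrix.fromBlocks p₁ 0 0 0 with hP₁def
  set Q : Matrix (Fin n ⊕ Fin n) (Fin n ⊕ Fin n) Λ₂ := W * P₂ * W' with hQ
  have hmem : ∀ i j : Fin n ⊕ Fin n, (P₁ i j, Q i j) ∈ ringPullback j₁ j₂ := by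
    intro i j
    have := congrFun (congrFun hkey.symm i) j
    simpa [ringPullback, Matrix.map_apply] using this
  set M : Matrix (Fin n ⊕ Fin n) (Fin n ⊕ Fin n) (Λ₁ × Λ₂) :=
    Matrix.of fun i j => (P₁ i j, Q i j) with hM
  have hMfst : M.map (RingHom.fst Λ₁ Λ₂) = P₁ := by ext i j; simp [hM, Matrix.map_apply]
  have hMsnd : M.map (RingHom.snd Λ₁ Λ₂) = Q := by ext i j; simp [hM, Matrix.map_apply]
  have hP₁idem : P₁ * P₁ = P₁ := by
    rw [hP₁def]; simp [Matrix.fromBlocks_multiply, hp₁]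
  have hP₂idem : P₂ * P₂ = P₂ := by
    rw [hP₂]; simp [Matrix.fromBlocks_multiply, hp₂]
  have hQidem : Q * Q = Q := by
    rw [hQ]
    simp only [mul_assoc]
    rw [← mul_assoc W' W, hW'W, one_mul, ← mul_assoc P₂ P₂, hP₂idem]
  have hMidem : M * M = M := by
    ext i j
    · have : ((M * M).map (RingHom.fst Λ₁ Λ₂)) i j = (M.map (RingHom.fst Λ₁ Λ₂)) i j := by
        rw [Matrix.map_mul, hMfst, hP₁idem]
      simpa [Matrix.map_apply] using this
    · have : ((M * M).map (RingHom.snd Λ₁ Λ₂)) i j = (M.map (RingHom.snd Λ₁ Λ₂)) i j := by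
        rw [Matrix.map_mul, hMsnd, hQidem]
      simpa [Matrix.map_apply] using this
  exact ⟨parta, W, W', hWW', hW'W, hWmap, hmem, hMidem, hMfst, hMsnd⟩
end

section
/- Let j₁ : Λ₁ → Λ' and j₂ : Λ₂ → Λ' be unital ring homomorphisms with j₂ surjective, and let Λ be the pullback ring. Let s₁ ∈ M_n(Λ₁) and s₂ ∈ M_n(Λ₂) be invertible matrices and u ∈ M_n(Λ') an invertible matrix such that j₁_*(s₁) = u · j₂_*(s₂) · u⁻¹. Then there exists an invertible matrix Ũ ∈ M_{2n}(Λ₂) with j₂_*(Ũ) = diag(u, u⁻¹), and, setting s̃₂ = Ũ · diag(s₂, 1_n) · Ũ⁻¹, the pair (diag(s₁, 1_n), s̃₂) defines an invertible matrix s ∈ M_{2n}(Λ) with i₁_*(s) = diag(s₁, 1_n) and i₂_*(s) = s̃₂. -/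
section Aux
variable {m : Type*} [Fintype m] [DecidableEq m]

private lemma cancel_aux {R : Type*} [Monoid R] (x x' y : R) (h : x * x' = 1) :
    x * (x' * y) = y := by rw [← mul_assoc, h, one_mul]

private lemma pair_mul {R S : Type*} [Ring R] [Ring S]
    (A C : Matrix m m R) (B D : Matrix m m S) :
    (Matrix.of fun i j => (A i j, B i j)) * (Matrix.of fun i j => (C i j, D i j)) =
      Matrix.of fun i j => ((A * C) i j, (B * D) i j) := by
  ext i j
  · simp [Matrix.mul_apply, Prod.fst_sum]
  · simp [Matrix.mul_apply, Prod.snd_sum]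

private lemma pair_one {R S : Type*} [Ring R] [Ring S] :
    (Matrix.of fun i j => ((1 : Matrix m m R) i j, (1 : Matrix m m S) i j)) = 1 := by
  ext i j
  all_goals by_cases h : i = j <;> simp [Matrix.one_apply, h]

end Aux

/-- Theorem 35 (invertible case): with j₂ surjective, s₁ and s₂ invertible and
j₁_*(s₁) = u·j₂_*(s₂)·u⁻¹, there is an invertible W ∈ M_{2n}(Λ₂) with
j₂_*(W) = diag(u,u⁻¹); setting s̃₂ = W·diag(s₂,1)·W⁻¹, the pair
(diag(s₁,1), s̃₂) has all entry pairs in the pullback ring Λ and defines an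
invertible matrix s over Λ whose projections are diag(s₁,1) and s̃₂. -/
theorem stmt_13 {Λ₁ Λ₂ Λ' : Type*} [Ring Λ₁] [Ring Λ₂] [Ring Λ']
    (j₁ : Λ₁ →+* Λ') (j₂ : Λ₂ →+* Λ') (hj₂ : Function.Surjective j₂) (n : ℕ)
    (s₁ s₁' : Matrix (Fin n) (Fin n) Λ₁) (hs₁ : s₁ * s₁' = 1) (hs₁' : s₁' * s₁ = 1)
    (s₂ s₂' : Matrix (Fin n) (Fin n) Λ₂) (hs₂ : s₂ * s₂' = 1) (hs₂' : s₂' * s₂ = 1)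
    (u u' : Matrix (Fin n) (Fin n) Λ') (hu : u * u' = 1) (hu' : u' * u = 1)
    (hconj : s₁.map j₁ = u * s₂.map j₂ * u') :
    ∃ W W' : Matrix (Fin n ⊕ Fin n) (Fin n ⊕ Fin n) Λ₂,
      W * W' = 1 ∧ W' * W = 1 ∧
      W.map j₂ = Matrix.fromBlocks u 0 0 u' ∧
      (∀ i j : Fin n ⊕ Fin n,
        ((Matrix.fromBlocks s₁ 0 0 1 : Matrix (Fin n ⊕ Fin n) (Fin n ⊕ Fin n) Λ₁) i j,
          (W * (Matrix.fromBlocks s₂ 0 0 1 : Matrix (Fin n ⊕ Fin n) (Fin n ⊕ Fin n) Λ₂)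
            * W') i j) ∈ ringPullback j₁ j₂) ∧
      (∀ i j : Fin n ⊕ Fin n,
        ((Matrix.fromBlocks s₁' 0 0 1 : Matrix (Fin n ⊕ Fin n) (Fin n ⊕ Fin n) Λ₁) i j,
          (W * (Matrix.fromBlocks s₂' 0 0 1 : Matrix (Fin n ⊕ Fin n) (Fin n ⊕ Fin n) Λ₂)
            * W') i j) ∈ ringPullback j₁ j₂) ∧
      (Matrix.of fun i j : Fin n ⊕ Fin n =>
            ((Matrix.fromBlocks s₁ 0 0 1 : Matrix (Fin n ⊕ Fin n) (Fin n ⊕ Fin n) Λ₁) i j,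
              (W * (Matrix.fromBlocks s₂ 0 0 1 : Matrix (Fin n ⊕ Fin n) (Fin n ⊕ Fin n) Λ₂)
                * W') i j)) *
          (Matrix.of fun i j : Fin n ⊕ Fin n =>
            ((Matrix.fromBlocks s₁' 0 0 1 : Matrix (Fin n ⊕ Fin n) (Fin n ⊕ Fin n) Λ₁) i j,
              (W * (Matrix.fromBlocks s₂' 0 0 1 : Matrix (Fin n ⊕ Fin n) (Fin n ⊕ Fin n) Λ₂)
                * W') i j)) = 1 ∧
      (Matrix.of fun i j : Fin n ⊕ Fin n =>
            ((Matrix.fromBlocks s₁' 0 0 1 : Matrix (Fin n ⊕ Fin n) (Fin n ⊕ Fin n) Λ₁) i j,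
              (W * (Matrix.fromBlocks s₂' 0 0 1 : Matrix (Fin n ⊕ Fin n) (Fin n ⊕ Fin n) Λ₂)
                * W') i j)) *
          (Matrix.of fun i j : Fin n ⊕ Fin n =>
            ((Matrix.fromBlocks s₁ 0 0 1 : Matrix (Fin n ⊕ Fin n) (Fin n ⊕ Fin n) Λ₁) i j,
              (W * (Matrix.fromBlocks s₂ 0 0 1 : Matrix (Fin n ⊕ Fin n) (Fin n ⊕ Fin n) Λ₂)
                * W') i j)) = 1 ∧
      (Matrix.of fun i j : Fin n ⊕ Fin n =>
          ((Matrix.fromBlocks s₁ 0 0 1 : Matrix (Fin n ⊕ Fin n) (Fin n ⊕ Fin n) Λ₁) i j,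
            (W * (Matrix.fromBlocks s₂ 0 0 1 : Matrix (Fin n ⊕ Fin n) (Fin n ⊕ Fin n) Λ₂)
              * W') i j)).map (RingHom.fst Λ₁ Λ₂) = Matrix.fromBlocks s₁ 0 0 1 ∧
      (Matrix.of fun i j : Fin n ⊕ Fin n =>
          ((Matrix.fromBlocks s₁ 0 0 1 : Matrix (Fin n ⊕ Fin n) (Fin n ⊕ Fin n) Λ₁) i j,
            (W * (Matrix.fromBlocks s₂ 0 0 1 : Matrix (Fin n ⊕ Fin n) (Fin n ⊕ Fin n) Λ₂)
              * W') i j)).map (RingHom.snd Λ₁ Λ₂) =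
        W * (Matrix.fromBlocks s₂ 0 0 1 : Matrix (Fin n ⊕ Fin n) (Fin n ⊕ Fin n) Λ₂) * W' := by
  classical
  -- lifts of u and u'
  choose f hf using hj₂
  set a : Matrix (Fin n) (Fin n) Λ₂ := Matrix.of fun i j => f (u i j) with ha
  set c : Matrix (Fin n) (Fin n) Λ₂ := Matrix.of fun i j => f (u' i j) with hc
  have hamap : a.map j₂ = u := by ext i j; simp [ha, Matrix.map_apply, hf]
  have hcmap : c.map j₂ = u' := by ext i j; simp [hc, Matrix.map_apply, hf]
  set A : Matrix (Fin n ⊕ Fin n) (Fin n ⊕ Fin n) Λ₂ := Matrix.fromBlocks 1 a 0 1 with hA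
  set A' : Matrix (Fin n ⊕ Fin n) (Fin n ⊕ Fin n) Λ₂ := Matrix.fromBlocks 1 (-a) 0 1 with hA'
  set B : Matrix (Fin n ⊕ Fin n) (Fin n ⊕ Fin n) Λ₂ := Matrix.fromBlocks 1 0 (-c) 1 with hB
  set B' : Matrix (Fin n ⊕ Fin n) (Fin n ⊕ Fin n) Λ₂ := Matrix.fromBlocks 1 0 c 1 with hB'
  set P : Matrix (Fin n ⊕ Fin n) (Fin n ⊕ Fin n) Λ₂ := Matrix.fromBlocks 0 (-1) 1 0 with hP
  set P' : Matrix (Fin n ⊕ Fin n) (Fin n ⊕ Fin n) Λ₂ := Matrix.fromBlocks 0 1 (-1) 0 with hP'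
  have hAA : A * A' = 1 := by
    simp [hA, hA', Matrix.fromBlocks_multiply, ← Matrix.fromBlocks_one]
  have hAA' : A' * A = 1 := by
    simp [hA, hA', Matrix.fromBlocks_multiply, ← Matrix.fromBlocks_one]
  have hBB : B * B' = 1 := by
    simp [hB, hB', Matrix.fromBlocks_multiply, ← Matrix.fromBlocks_one]
  have hBB' : B' * B = 1 := by
    simp [hB, hB', Matrix.fromBlocks_multiply, ← Matrix.fromBlocks_one]
  have hPP : P * P' = 1 := by
    simp [hP, hP', Matrix.fromBlocks_multiply, ← Matrix.fromBlocks_one]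
  have hPP' : P' * P = 1 := by
    simp [hP, hP', Matrix.fromBlocks_multiply, ← Matrix.fromBlocks_one]
  set W : Matrix (Fin n ⊕ Fin n) (Fin n ⊕ Fin n) Λ₂ := A * B * A * P with hW
  set W' : Matrix (Fin n ⊕ Fin n) (Fin n ⊕ Fin n) Λ₂ := P' * A' * B' * A' with hW'
  have hWW : W * W' = 1 := by
    rw [hW, hW']
    simp only [mul_assoc]
    rw [cancel_aux _ _ _ hPP, cancel_aux _ _ _ hAA, cancel_aux _ _ _ hBB, hAA]
  have hWW' : W' * W = 1 := by
    rw [hW, hW']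
    simp only [mul_assoc]
    rw [cancel_aux _ _ _ hAA', cancel_aux _ _ _ hBB', cancel_aux _ _ _ hAA', hPP']
  -- maps of the factors
  have mapmul : ∀ X Y : Matrix (Fin n ⊕ Fin n) (Fin n ⊕ Fin n) Λ₂,
      (X * Y).map j₂ = X.map j₂ * Y.map j₂ := fun X Y => by
    ext i j; simp [Matrix.map_apply, Matrix.mul_apply]
  have mapmul1 : ∀ X Y : Matrix (Fin n) (Fin n) Λ₁,
      (X * Y).map j₁ = X.map j₁ * Y.map j₁ := fun X Y => by
    ext i j; simp [Matrix.map_apply, Matrix.mul_apply]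
  have mapmul2 : ∀ X Y : Matrix (Fin n) (Fin n) Λ₂,
      (X * Y).map j₂ = X.map j₂ * Y.map j₂ := fun X Y => by
    ext i j; simp [Matrix.map_apply, Matrix.mul_apply]
  have hAmap : A.map j₂ = Matrix.fromBlocks 1 u 0 1 := by
    rw [hA, Matrix.fromBlocks_map]
    simp [hamap, Matrix.map_one _ (map_zero j₂) (map_one j₂), Matrix.map_zero]
  have hA'map : A'.map j₂ = Matrix.fromBlocks 1 (-u) 0 1 := by
    rw [hA', Matrix.fromBlocks_map]
    have hneg : (-a).map j₂ = -u := by ext i j; simp [Matrix.map_apply, ha, hf]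
    simp [hneg, Matrix.map_one _ (map_zero j₂) (map_one j₂), Matrix.map_zero]
  have hBmap : B.map j₂ = Matrix.fromBlocks 1 0 (-u') 1 := by
    rw [hB, Matrix.fromBlocks_map]
    have hneg : (-c).map j₂ = -u' := by ext i j; simp [Matrix.map_apply, hc, hf]
    simp [hneg, Matrix.map_one _ (map_zero j₂) (map_one j₂), Matrix.map_zero]
  have hB'map : B'.map j₂ = Matrix.fromBlocks 1 0 u' 1 := by
    rw [hB', Matrix.fromBlocks_map]
    simp [hcmap, Matrix.map_one _ (map_zero j₂) (map_one j₂), Matrix.map_zero]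
  have hmapneg1 : ((-1 : Matrix (Fin n) (Fin n) Λ₂)).map j₂ = -1 := by
    ext i j; by_cases h : i = j <;> simp [Matrix.map_apply, Matrix.one_apply, h]
  have hPmap : P.map j₂ = Matrix.fromBlocks 0 (-1) 1 0 := by
    rw [hP, Matrix.fromBlocks_map]
    simp [hmapneg1, Matrix.map_one _ (map_zero j₂) (map_one j₂), Matrix.map_zero]
  have hP'map : P'.map j₂ = Matrix.fromBlocks 0 1 (-1) 0 := by
    rw [hP', Matrix.fromBlocks_map]
    simp [hmapneg1, Matrix.map_one _ (map_zero j₂) (map_one j₂), Matrix.map_zero]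
  have hWmap : W.map j₂ = Matrix.fromBlocks u 0 0 u' := by
    rw [hW, mapmul, mapmul, mapmul, hAmap, hBmap, hPmap]
    simp [Matrix.fromBlocks_multiply, hu, hu', sub_eq_zero]
  have hW'map : W'.map j₂ = Matrix.fromBlocks u' 0 0 u := by
    rw [hW', mapmul, mapmul, mapmul, hP'map, hA'map, hB'map]
    simp [Matrix.fromBlocks_multiply, hu, hu', sub_eq_zero]
  -- s₁' conjugation
  have hconj' : s₁'.map j₁ = u * s₂'.map j₂ * u' := by
    have h1 : s₁.map j₁ * s₁'.map j₁ = 1 := by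
      rw [← mapmul1, hs₁, Matrix.map_one _ (map_zero j₁) (map_one j₁)]
    have h2 : (u * s₂'.map j₂ * u') * s₁.map j₁ = 1 := by
      rw [hconj]
      have hs : s₂'.map j₂ * s₂.map j₂ = 1 := by
        rw [← mapmul2, hs₂', Matrix.map_one _ (map_zero j₂) (map_one j₂)]
      calc u * s₂'.map j₂ * u' * (u * s₂.map j₂ * u')
          = u * (s₂'.map j₂ * ((u' * u) * (s₂.map j₂ * u'))) := by
            simp only [mul_assoc]
        _ = 1 := by rw [hu', one_mul, ← mul_assoc (s₂'.map ⇑j₂), hs, one_mul, hu]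
    calc s₁'.map j₁ = 1 * s₁'.map j₁ := (one_mul _).symm
      _ = (u * s₂'.map j₂ * u') * (s₁.map j₁ * s₁'.map j₁) := by rw [← h2, mul_assoc]
      _ = u * s₂'.map j₂ * u' := by rw [h1, mul_one]
  -- key map equalities
  set D : Matrix (Fin n ⊕ Fin n) (Fin n ⊕ Fin n) Λ₂ := Matrix.fromBlocks s₂ 0 0 1 with hD
  set D' : Matrix (Fin n ⊕ Fin n) (Fin n ⊕ Fin n) Λ₂ := Matrix.fromBlocks s₂' 0 0 1 with hD'
  have hDmap : D.map j₂ = Matrix.fromBlocks (s₂.map j₂) 0 0 1 := by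
    rw [hD, Matrix.fromBlocks_map]
    simp [Matrix.map_one _ (map_zero j₂) (map_one j₂), Matrix.map_zero]
  have hD'map : D'.map j₂ = Matrix.fromBlocks (s₂'.map j₂) 0 0 1 := by
    rw [hD', Matrix.fromBlocks_map]
    simp [Matrix.map_one _ (map_zero j₂) (map_one j₂), Matrix.map_zero]
  have key : ((Matrix.fromBlocks s₁ 0 0 1 : Matrix (Fin n ⊕ Fin n) (Fin n ⊕ Fin n) Λ₁)).map j₁
      = (W * D * W').map j₂ := by
    rw [mapmul, mapmul, hWmap, hW'map, hDmap, Matrix.fromBlocks_map]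
    simp [Matrix.fromBlocks_multiply, hu', hconj, mul_assoc,
      Matrix.map_one _ (map_zero j₁) (map_one j₁), Matrix.map_zero]
  have key' : ((Matrix.fromBlocks s₁' 0 0 1 : Matrix (Fin n ⊕ Fin n) (Fin n ⊕ Fin n) Λ₁)).map j₁
      = (W * D' * W').map j₂ := by
    rw [mapmul, mapmul, hWmap, hW'map, hD'map, Matrix.fromBlocks_map]
    simp [Matrix.fromBlocks_multiply, hu', hconj', mul_assoc,
      Matrix.map_one _ (map_zero j₁) (map_one j₁), Matrix.map_zero]
  have hDD : D * D' = 1 := by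
    simp [hD, hD', Matrix.fromBlocks_multiply, hs₂, ← Matrix.fromBlocks_one]
  have hDD' : D' * D = 1 := by
    simp [hD, hD', Matrix.fromBlocks_multiply, hs₂', ← Matrix.fromBlocks_one]
  have hprod : (W * D * W') * (W * D' * W') = 1 := by
    calc (W * D * W') * (W * D' * W')
        = W * (D * ((W' * W) * (D' * W'))) := by simp only [mul_assoc]
      _ = 1 := by rw [hWW', one_mul, ← mul_assoc D, hDD, one_mul, hWW]
  have hprod' : (W * D' * W') * (W * D * W') = 1 := by
    calc (W * D' * W') * (W * D * W')
        = W * (D' * ((W' * W) * (D * W'))) := by simp only [mul_assoc]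
      _ = 1 := by rw [hWW', one_mul, ← mul_assoc D', hDD', one_mul, hWW]
  have hE1 : (Matrix.fromBlocks s₁ 0 0 1 : Matrix (Fin n ⊕ Fin n) (Fin n ⊕ Fin n) Λ₁) *
      Matrix.fromBlocks s₁' 0 0 1 = 1 := by
    simp [Matrix.fromBlocks_multiply, hs₁, ← Matrix.fromBlocks_one]
  have hE1' : (Matrix.fromBlocks s₁' 0 0 1 : Matrix (Fin n ⊕ Fin n) (Fin n ⊕ Fin n) Λ₁) *
      Matrix.fromBlocks s₁ 0 0 1 = 1 := by
    simp [Matrix.fromBlocks_multiply, hs₁', ← Matrix.fromBlocks_one]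
  refine ⟨W, W', hWW, hWW', hWmap, ?_, ?_, ?_, ?_, ?_, ?_⟩
  · intro i j
    have h := congrFun (congrFun key i) j
    simpa [ringPullback, Matrix.map_apply] using h
  · intro i j
    have h := congrFun (congrFun key' i) j
    simpa [ringPullback, Matrix.map_apply] using h
  · rw [pair_mul, hE1, hprod, pair_one]
  · rw [pair_mul, hE1', hprod', pair_one]
  · ext i j; simp [Matrix.map_apply]
  · ext i j; simp [Matrix.map_apply]
end

section
/- Let R be an associative unital ring and let A, B ∈ M_n(R) be arbitrary matrices (not assumed invertible). Set S₀ = 1_n − BA and S₁ = 1_n − AB. Then the 2n×2n block matrix L = [[S₀, −(1_n + S₀)B],[A, S₁]] is invertible, with inverse L⁻¹ = [[S₀, (1_n + S₀)B],[−A, S₁]]. -/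
/-- For arbitrary A, B ∈ M_n(R), with S₀ = 1 - BA and S₁ = 1 - AB, the matrix
L = [[S₀, -(1+S₀)B],[A, S₁]] is invertible with inverse
L⁻¹ = [[S₀, (1+S₀)B],[-A, S₁]]. -/
theorem stmt_16 {R : Type*} [Ring R] (n : ℕ) (A B : Matrix (Fin n) (Fin n) R) :
    Matrix.fromBlocks (1 - B * A) (-((1 + (1 - B * A)) * B)) A (1 - A * B) *
        Matrix.fromBlocks (1 - B * A) ((1 + (1 - B * A)) * B) (-A) (1 - A * B) = 1 ∧
    Matrix.fromBlocks (1 - B * A) ((1 + (1 - B * A)) * B) (-A) (1 - A * B) *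
        Matrix.fromBlocks (1 - B * A) (-((1 + (1 - B * A)) * B)) A (1 - A * B) = 1 := by
  constructor <;>
  · rw [Matrix.fromBlocks_multiply, ← Matrix.fromBlocks_one, Matrix.fromBlocks_inj]
    refine ⟨?_, ?_, ?_, ?_⟩ <;> noncomm_ring
end

section
/- Let R be an associative unital ring and let A, B, K ∈ M_n(R). Set S₀ = 1_n − BA, S₁ = 1_n − AB, S̃₀ = 1_n − B(A+K), S̃₁ = 1_n − (A+K)B, and define L = [[S₀, −(1_n + S₀)B],[A, S₁]] and L̃ = [[S̃₀, −(1_n + S̃₀)B],[A+K, S̃₁]]. Then L̃ = M · L, where M = [[1_n − BK, −BKB],[K, 1_n + KB]]; in particular M = L̃ · L⁻¹ is invertible, and the idempotents P̃ = L̃ · diag(1_n,0_n) · L̃⁻¹ and P = L · diag(1_n,0_n) · L⁻¹ are conjugate: P̃ = M · P · M⁻¹. -/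
open Matrix

private lemma blocks_eq {R : Type*} [Ring R] {n : ℕ} {a b c d a' b' c' d' : Matrix (Fin n) (Fin n) R}
    (h1 : a = a') (h2 : b = b') (h3 : c = c') (h4 : d = d') :
    Matrix.fromBlocks a b c d = Matrix.fromBlocks a' b' c' d' := by
  rw [h1, h2, h3, h4]

private lemma Lmul_right {R : Type*} [Ring R] {n : ℕ} (A B : Matrix (Fin n) (Fin n) R) :
    Matrix.fromBlocks (1 - B * A) (-((1 + (1 - B * A)) * B)) A (1 - A * B) *
      Matrix.fromBlocks (1 - B * A) ((1 + (1 - B * A)) * B) (-A) (1 - A * B) = 1 := by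
  rw [Matrix.fromBlocks_multiply, ← Matrix.fromBlocks_one]
  exact blocks_eq (by noncomm_ring) (by noncomm_ring) (by noncomm_ring) (by noncomm_ring)

private lemma Lmul_left {R : Type*} [Ring R] {n : ℕ} (A B : Matrix (Fin n) (Fin n) R) :
    Matrix.fromBlocks (1 - B * A) ((1 + (1 - B * A)) * B) (-A) (1 - A * B) *
      Matrix.fromBlocks (1 - B * A) (-((1 + (1 - B * A)) * B)) A (1 - A * B) = 1 := by
  rw [Matrix.fromBlocks_multiply, ← Matrix.fromBlocks_one]
  exact blocks_eq (by noncomm_ring) (by noncomm_ring) (by noncomm_ring) (by noncomm_ring)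

private lemma key {R : Type*} [Ring R] {n : ℕ} (A B K : Matrix (Fin n) (Fin n) R) :
    (Matrix.fromBlocks (1 - B * (A + K)) (-((1 + (1 - B * (A + K))) * B)) (A + K) (1 - (A + K) * B) : Matrix (Fin n ⊕ Fin n) (Fin n ⊕ Fin n) R) =
      Matrix.fromBlocks (1 - B * K) (-(B * K * B)) K (1 + K * B) *
        Matrix.fromBlocks (1 - B * A) (-((1 + (1 - B * A)) * B)) A (1 - A * B) := by
  rw [Matrix.fromBlocks_multiply]
  exact blocks_eq (by noncomm_ring) (by noncomm_ring) (by noncomm_ring) (by noncomm_ring)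

/-- Changing the lift A to A + K multiplies L on the left by the invertible matrix
M = [[1-BK, -BKB],[K, 1+KB]]: L̃ = M·L, M is invertible (with inverse L·L̃⁻¹), and
the idempotents P̃ = L̃·diag(1,0)·L̃⁻¹ and P = L·diag(1,0)·L⁻¹ satisfy P̃ = M·P·M⁻¹. -/
theorem stmt_18 {R : Type*} [Ring R] (n : ℕ) (A B K : Matrix (Fin n) (Fin n) R) :
    let S₀ := (1 : Matrix (Fin n) (Fin n) R) - B * A
    let S₁ := (1 : Matrix (Fin n) (Fin n) R) - A * B
    let T₀ := (1 : Matrix (Fin n) (Fin n) R) - B * (A + K)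
    let T₁ := (1 : Matrix (Fin n) (Fin n) R) - (A + K) * B
    let L := Matrix.fromBlocks S₀ (-((1 + S₀) * B)) A S₁
    let Linv := Matrix.fromBlocks S₀ ((1 + S₀) * B) (-A) S₁
    let Lt := Matrix.fromBlocks T₀ (-((1 + T₀) * B)) (A + K) T₁
    let Ltinv := Matrix.fromBlocks T₀ ((1 + T₀) * B) (-(A + K)) T₁
    let M := Matrix.fromBlocks (1 - B * K) (-(B * K * B)) K (1 + K * B)
    let Minv := L * Ltinv
    let e₁ : Matrix (Fin n ⊕ Fin n) (Fin n ⊕ Fin n) R := Matrix.fromBlocks 1 0 0 0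
    Lt = M * L ∧ M * Minv = 1 ∧ Minv * M = 1 ∧
      Lt * e₁ * Ltinv = M * (L * e₁ * Linv) * Minv := by
  intro S₀ S₁ T₀ T₁ L Linv Lt Ltinv M Minv e₁
  have hL : L * Linv = 1 := Lmul_right A B
  have hL' : Linv * L = 1 := Lmul_left A B
  have hLt : Lt * Ltinv = 1 := Lmul_right (A + K) B
  have hLt' : Ltinv * Lt = 1 := Lmul_left (A + K) B
  have hML : Lt = M * L := key A B K
  have hM' : M = Lt * Linv := by rw [hML, mul_assoc, hL, mul_one]
  refine ⟨hML, ?_, ?_, ?_⟩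
  · rw [show M * Minv = M * L * Ltinv from (mul_assoc _ _ _).symm, ← hML, hLt]
  · rw [hM', show Minv * (Lt * Linv) = L * (Ltinv * Lt) * Linv from by
      simp only [Minv, mul_assoc], hLt', mul_one, hL]
  · rw [hML]
    simp only [Minv, mul_assoc]
    rw [show Linv * (L * Ltinv) = Ltinv from by rw [← mul_assoc, hL', one_mul]]
end

section
/- Let j₁ : Λ₁ → Λ' and j₂ : Λ₂ → Λ' be unital ring homomorphisms and let Λ be the pullback ring. Let U ∈ M_n(Λ') be invertible and let A, B ∈ M_n(Λ₁) satisfy j₁_*(A) = U and j₁_*(B) = U⁻¹. Set S₀ = 1_n − BA, S₁ = 1_n − AB, P = [[S₀², S₀(1_n+S₀)B],[S₁A, 1_n − S₁²]] ∈ M_{2n}(Λ₁), and e₂ = diag(0_n, 1_n) ∈ M_{2n}(Λ₂). Then j₁_*(P) = diag(0_n, 1_n) = j₂_*(e₂), so every pair of corresponding entries (P_{ij}, (e₂)_{ij}) lies in Λ, and the resulting matrix ℙ_U = (P, e₂) ∈ M_{2n}(Λ) is idempotent, with i₁_*(ℙ_U) = P and i₂_*(ℙ_U) = e₂. -/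
/-- Construction of the double idempotent ℙ_U: if A, B over Λ₁ lift U, U⁻¹ via j₁,
then with S₀ = 1-BA, S₁ = 1-AB, P = [[S₀², S₀(1+S₀)B],[S₁A, 1-S₁²]] and
e₂ = diag(0,1) over Λ₂, one has j₁_*(P) = diag(0,1) = j₂_*(e₂); all entry pairs
(P_{ij}, (e₂)_{ij}) lie in the pullback ring Λ, and the resulting double matrix
ℙ_U = (P, e₂) over Λ is idempotent with projections P and e₂. -/
theorem stmt_19 {Λ₁ Λ₂ Λ' : Type*} [Ring Λ₁] [Ring Λ₂] [Ring Λ']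
    (j₁ : Λ₁ →+* Λ') (j₂ : Λ₂ →+* Λ') (n : ℕ)
    (U U' : Matrix (Fin n) (Fin n) Λ') (hU : U * U' = 1) (hU' : U' * U = 1)
    (A B : Matrix (Fin n) (Fin n) Λ₁) (hA : A.map j₁ = U) (hB : B.map j₁ = U') :
    let S₀ := (1 : Matrix (Fin n) (Fin n) Λ₁) - B * A
    let S₁ := (1 : Matrix (Fin n) (Fin n) Λ₁) - A * B
    let P : Matrix (Fin n ⊕ Fin n) (Fin n ⊕ Fin n) Λ₁ :=
      Matrix.fromBlocks (S₀ * S₀) (S₀ * (1 + S₀) * B) (S₁ * A) (1 - S₁ * S₁)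
    let e₂ : Matrix (Fin n ⊕ Fin n) (Fin n ⊕ Fin n) Λ₂ := Matrix.fromBlocks 0 0 0 1
    let PU : Matrix (Fin n ⊕ Fin n) (Fin n ⊕ Fin n) (Λ₁ × Λ₂) :=
      Matrix.of fun i j => (P i j, e₂ i j)
    P.map j₁ = Matrix.fromBlocks 0 0 0 1 ∧
    e₂.map j₂ = Matrix.fromBlocks 0 0 0 1 ∧
    (∀ i j : Fin n ⊕ Fin n, (P i j, e₂ i j) ∈ ringPullback j₁ j₂) ∧
    PU * PU = PU ∧
    PU.map (RingHom.fst Λ₁ Λ₂) = P ∧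
    PU.map (RingHom.snd Λ₁ Λ₂) = e₂ := by

  intro S₀ S₁ P e₂ PU
  have hS₀ : S₀.map j₁ = 0 := by
    have : S₀.map j₁ = 1 - U' * U := by
      simp [S₀, Matrix.map_sub, Matrix.map_mul, hA, hB]
    rw [this, hU', sub_self]
  have hS₁ : S₁.map j₁ = 0 := by
    have : S₁.map j₁ = 1 - U * U' := by
      simp [S₁, Matrix.map_sub, Matrix.map_mul, hA, hB]
    rw [this, hU, sub_self]
  have hP : P.map j₁ = Matrix.fromBlocks 0 0 0 1 := by
    simp [P, Matrix.fromBlocks_map, Matrix.map_mul, Matrix.map_sub, Matrix.map_add,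
      Matrix.map_one, hS₀, hS₁]
  have he₂ : e₂.map j₂ = Matrix.fromBlocks 0 0 0 1 := by
    simp [e₂, Matrix.fromBlocks_map, Matrix.map_zero, Matrix.map_one]
  have hmem : ∀ i j : Fin n ⊕ Fin n, (P i j, e₂ i j) ∈ ringPullback j₁ j₂ := by
    intro i j
    have h1 : j₁ (P i j) = Matrix.fromBlocks 0 0 0 1 i j := congrFun (congrFun hP i) j
    have h2 : j₂ (e₂ i j) = Matrix.fromBlocks 0 0 0 1 i j := congrFun (congrFun he₂ i) j
    exact h1.trans h2.symm
  have hP2 : P * P = P := by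
    have h11 : S₀ * S₀ * (S₀ * S₀) + S₀ * (1 + S₀) * B * (S₁ * A) = S₀ * S₀ := by
      simp only [S₀, S₁]; noncomm_ring
    have h12 : S₀ * S₀ * (S₀ * (1 + S₀) * B) + S₀ * (1 + S₀) * B * (1 - S₁ * S₁)
        = S₀ * (1 + S₀) * B := by
      simp only [S₀, S₁]; noncomm_ring
    have h21 : S₁ * A * (S₀ * S₀) + (1 - S₁ * S₁) * (S₁ * A) = S₁ * A := by
      simp only [S₀, S₁]; noncomm_ring
    have h22 : S₁ * A * (S₀ * (1 + S₀) * B) + (1 - S₁ * S₁) * (1 - S₁ * S₁)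
        = 1 - S₁ * S₁ := by
      simp only [S₀, S₁]; noncomm_ring
    show Matrix.fromBlocks _ _ _ _ * Matrix.fromBlocks _ _ _ _ = P
    rw [Matrix.fromBlocks_multiply, h11, h12, h21, h22]
  have he2sq : e₂ * e₂ = e₂ := by
    show Matrix.fromBlocks _ _ _ _ * Matrix.fromBlocks _ _ _ _ = e₂
    rw [Matrix.fromBlocks_multiply]
    simp [e₂]
  have hfst : PU.map (RingHom.fst Λ₁ Λ₂) = P := rfl
  have hsnd : PU.map (RingHom.snd Λ₁ Λ₂) = e₂ := rfl
  have hPU : PU * PU = PU := by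
    ext i j
    · have h := congrFun (congrFun hP2 i) j
      simpa [Matrix.mul_apply, PU, Prod.fst_sum, Prod.snd_sum] using h
    · have h := congrFun (congrFun he2sq i) j
      simpa [Matrix.mul_apply, PU, Prod.fst_sum, Prod.snd_sum] using h
  exact ⟨hP, he₂, hmem, hPU, hfst, hsnd⟩
end
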